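/- If G is a randomly k-dimensional graph that is not a complete graph, then for every pair of distinct vertices u, v ∈ V(G) we have N(u) \ {v} ≠ N(v) \ {u}. -/

import Mathlib

open SimpleGraph

/-- `W` is a resolving set for `G`: distinct vertices have distinct
metric representations with respect to `W`. -/
def IsResolvingSet {V : Type*} (G : SimpleGraph V) (W : Finset V) : Prop :=
  ∀ u v : V, u ≠ v → ∃ w ∈ W, G.dist u w ≠ G.dist v w

/-- The metric dimension `β(G)`: minimum cardinality of a resolving set. -/
noncomputable def metricDim {V : Type*} [Fintype V] (G : SimpleGraph V) : ℕ :=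
  sInf {k | ∃ W : Finset V, W.card = k ∧ IsResolvingSet G W}

/-- A (metric) basis of `G`: a resolving set of minimum cardinality. -/
def IsMetricBasis {V : Type*} [Fintype V] (G : SimpleGraph V) (B : Finset V) : Prop :=
  IsResolvingSet G B ∧ B.card = metricDim G

/-- The resolving number `res(G)`: the minimum `k` such that every `k`-set of
vertices is a resolving set. -/
noncomputable def resolvingNumber {V : Type*} [Fintype V] (G : SimpleGraph V) : ℕ :=
  sInf {k | ∀ W : Finset V, W.card = k → IsResolvingSet G W}

/-- The basis number `bas(G)`: the maximum `r` such that every `r`-set of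
vertices is contained in some basis. -/
noncomputable def basisNumber {V : Type*} [Fintype V] (G : SimpleGraph V) : ℕ :=
  sSup {r | r ≤ Fintype.card V ∧
    ∀ S : Finset V, S.card = r → ∃ B : Finset V, S ⊆ B ∧ IsMetricBasis G B}

/-- `G` is randomly `k`-dimensional: `β(G) = k` and every `k`-set of vertices
is a basis of `G`. -/
def RandomlyDimensional {V : Type*} [Fintype V] (G : SimpleGraph V) (k : ℕ) : Prop :=
  metricDim G = k ∧ ∀ W : Finset V, W.card = k → IsMetricBasis G W

/-- Step lemma: a neighbor one closer to the target. -/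
private lemma exists_adj_step {V : Type*} (G : SimpleGraph V) (hG : G.Connected)
    {u w : V} (huw : u ≠ w) :
    ∃ x, G.Adj u x ∧ G.dist x w + 1 = G.dist u w := by
  obtain ⟨p, hp⟩ := hG.exists_walk_length_eq_dist u w
  cases p with
  | nil => exact absurd rfl huw
  | @cons _ x _ hadj q =>
    refine ⟨x, hadj, ?_⟩
    have h1 : G.dist x w ≤ q.length := SimpleGraph.dist_le q
    have h2 : G.dist u w ≤ G.dist u x + G.dist x w := hG.dist_triangle
    have h3 : G.dist u x ≤ 1 := by
      simpa using SimpleGraph.dist_le hadj.toWalk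
    simp only [SimpleGraph.Walk.length_cons] at hp
    omega

/-- Twins have equal distance to every other vertex. -/
private lemma twin_dist_le {V : Type*} (G : SimpleGraph V) (hG : G.Connected)
    {u v : V}
    (htwin : ∀ x, x ∈ G.neighborSet u \ {v} ↔ x ∈ G.neighborSet v \ {u})
    {w : V} (hwu : w ≠ u) (hwv : w ≠ v) :
    G.dist u w ≤ G.dist v w := by
  obtain ⟨x, hadj, hx⟩ := exists_adj_step G hG (Ne.symm hwv)
  by_cases hxu : x = u
  · subst hxu
    omega
  · have hx' : x ∈ G.neighborSet u \ {v} := by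
      rw [htwin]
      exact ⟨hadj, by simp [hxu]⟩
    have : G.Adj u x := hx'.1
    have h2 : G.dist u w ≤ G.dist u x + G.dist x w := hG.dist_triangle
    have h3 : G.dist u x ≤ 1 := by
      simpa using SimpleGraph.dist_le this.toWalk
    omega

theorem randomlyDimensional_no_twins {V : Type*} [Fintype V] (G : SimpleGraph V)
    (hG : G.Connected) (k : ℕ) (h : RandomlyDimensional G k) (hne : G ≠ ⊤) :
    ∀ u v : V, u ≠ v → G.neighborSet u \ {v} ≠ G.neighborSet v \ {u} := by
  classical
  intro u v huv htwin
  have htwin' : ∀ x, x ∈ G.neighborSet u \ {v} ↔ x ∈ G.neighborSet v \ {u} := by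
    intro x; rw [htwin]
  have htwin'' : ∀ x, x ∈ G.neighborSet v \ {u} ↔ x ∈ G.neighborSet u \ {v} := by
    intro x; rw [htwin]
  -- twins have equal distances to other vertices
  have hdist : ∀ w : V, w ≠ u → w ≠ v → G.dist u w = G.dist v w := fun w hwu hwv =>
    le_antisymm (twin_dist_le G hG htwin' hwu hwv) (twin_dist_le G hG htwin'' hwv hwu)
  -- there are nonadjacent distinct vertices
  have hnadj : ∃ a b : V, a ≠ b ∧ ¬ G.Adj a b := by
    by_contra hcon
    push_neg at hcon
    apply hne
    ext a b
    simp only [top_adj]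
    exact ⟨fun hab => hab.ne, fun hab => hcon a b hab⟩
  obtain ⟨a, b, hab, hnab⟩ := hnadj
  -- a neighbor x of a that is one step closer to b
  obtain ⟨x, hax, hx⟩ := exists_adj_step G hG hab
  have hdab : 2 ≤ G.dist a b := by
    have h1 : G.dist a b ≠ 1 := fun hh => hnab (SimpleGraph.dist_eq_one_iff_adj.mp hh)
    have h2 : 0 < G.dist a b := hG.pos_dist_of_ne hab
    omega
  have hxb : x ≠ b := by
    intro hh; subst hh
    simp [SimpleGraph.dist_self] at hx
    omega
  -- W = univ \ {a, x} is a resolving set of size |V| - 2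
  set W : Finset V := Finset.univ \ {a, x} with hW
  have hres : IsResolvingSet G W := by
    intro p q hpq
    by_cases hp : p ∈ W
    · exact ⟨p, hp, by
        simpa [SimpleGraph.dist_self] using (hG.pos_dist_of_ne hpq.symm).ne⟩
    · by_cases hq : q ∈ W
      · exact ⟨q, hq, by
          simpa [SimpleGraph.dist_self] using (hG.pos_dist_of_ne hpq).ne'⟩
      · -- p, q ∈ {a, x}
        simp only [hW, Finset.mem_sdiff, Finset.mem_univ, true_and, not_not,
          Finset.mem_insert, Finset.mem_singleton] at hp hq
        have hbW : b ∈ W := by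
          simp only [hW, Finset.mem_sdiff, Finset.mem_univ, true_and,
            Finset.mem_insert, Finset.mem_singleton]
          push_neg
          exact ⟨Ne.symm hab, Ne.symm hxb⟩
        have hxa : x ≠ a := hax.ne'
        have hkey : G.dist a b ≠ G.dist x b := by omega
        rcases hp with rfl | rfl <;> rcases hq with rfl | rfl
        · exact absurd rfl hpq
        · exact ⟨b, hbW, hkey⟩
        · exact ⟨b, hbW, hkey.symm⟩
        · exact absurd rfl hpq
  have hWcard : W.card = Fintype.card V - 2 := by
    rw [hW, Finset.card_sdiff_of_subset (by simp), Finset.card_univ]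
    simp [Finset.card_insert_of_notMem, hax.ne]
  -- hence k ≤ |V| - 2
  have hkle : k ≤ Fintype.card V - 2 := by
    rw [← h.1]
    exact Nat.sInf_le ⟨W, hWcard, hres⟩
  -- pick a k-set avoiding u and v
  have hcard : k ≤ (Finset.univ \ ({u, v} : Finset V)).card := by
    rw [Finset.card_sdiff_of_subset (by simp), Finset.card_univ]
    simpa [Finset.card_insert_of_notMem, huv] using hkle
  obtain ⟨W', hW'sub, hW'card⟩ := Finset.exists_subset_card_eq hcard
  have hbasis := (h.2 W' hW'card).1
  obtain ⟨w, hwW', hwne⟩ := hbasis u v huv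
  have hw := hW'sub hwW'
  simp only [Finset.mem_sdiff, Finset.mem_univ, true_and, Finset.mem_insert,
    Finset.mem_singleton] at hw
  push_neg at hw
  exact hwne (hdist w hw.1 hw.2)
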